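/- Suppose the conditions of Assumption 2 hold: l·μ(l,m+1) − l·μ(l,m) is non-increasing in m and non-decreasing in l, and (l+1)·μ(l+1,m) − l·μ(l,m) is non-increasing in l and non-decreasing in m. Then on each anti-diagonal {(l,m) : l+m = n, 0 ≤ l ≤ min(n,L)}, the total service rate l·μ(l,m) as a function of l (with m = n−l) is unimodal: there exists l* such that l·μ(l,n−l) is non-decreasing for l ≤ l* and non-increasing for l ≥ l*. -/
import Mathlib


/-- Under Assumption 2, the total service rate is unimodal along every anti-diagonal
`l + m = n`. -/
theorem stmt3
    (L : ℕ) (hL : 0 < L) (μ : ℕ → ℕ → ℝ)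
    (hpos : ∀ l, l ≤ L → ∀ m, 0 < μ l m)
    (h1m : ∀ l, l ≤ L → ∀ m,
      (l : ℝ) * μ l (m + 2) - (l : ℝ) * μ l (m + 1) ≤
        (l : ℝ) * μ l (m + 1) - (l : ℝ) * μ l m)
    (h1l : ∀ l, l + 1 ≤ L → ∀ m,
      (l : ℝ) * μ l (m + 1) - (l : ℝ) * μ l m ≤
        ((l : ℝ) + 1) * μ (l + 1) (m + 1) - ((l : ℝ) + 1) * μ (l + 1) m)
    (h2l : ∀ l, l + 2 ≤ L → ∀ m,
      ((l : ℝ) + 2) * μ (l + 2) m - ((l : ℝ) + 1) * μ (l + 1) m ≤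
        ((l : ℝ) + 1) * μ (l + 1) m - (l : ℝ) * μ l m)
    (h2m : ∀ l, l + 1 ≤ L → ∀ m,
      ((l : ℝ) + 1) * μ (l + 1) m - (l : ℝ) * μ l m ≤
        ((l : ℝ) + 1) * μ (l + 1) (m + 1) - (l : ℝ) * μ l (m + 1)) :
    ∀ n : ℕ, ∃ lstar : ℕ,
      (∀ l : ℕ, l + 1 ≤ lstar → l + 1 ≤ min n L →
        (l : ℝ) * μ l (n - l) ≤ ((l : ℝ) + 1) * μ (l + 1) (n - (l + 1))) ∧
      (∀ l : ℕ, lstar ≤ l → l + 1 ≤ min n L →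
        ((l : ℝ) + 1) * μ (l + 1) (n - (l + 1)) ≤ (l : ℝ) * μ l (n - l)) := by
  intro n
  classical
  set g : ℕ → ℝ := fun l =>
    ((l : ℝ) + 1) * μ (l + 1) (n - (l + 1)) - (l : ℝ) * μ l (n - l) with hg
  -- The forward difference g is non-increasing along the anti-diagonal.
  have key : ∀ l, l + 2 ≤ min n L → g (l + 1) ≤ g l := by
    intro l hl
    have hlL : l + 2 ≤ L := le_trans hl (min_le_right _ _)
    have hln : l + 2 ≤ n := le_trans hl (min_le_left _ _)
    set m := n - (l + 2) with hm
    have e2 : n - (l + 1 + 1) = m := by omega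
    have e1 : n - (l + 1) = m + 1 := by omega
    have e0 : n - l = m + 2 := by omega
    have A := h2l l hlL m
    have B := h2m l (by omega) m
    have C := h1m l (by omega) m
    have D := h1l l (by omega) m
    simp only [hg, e0, e1, e2]
    push_cast
    linarith
  by_cases hex : ∃ l, l + 1 ≤ min n L ∧ g l < 0
  · refine ⟨Nat.find hex, ?_, ?_⟩
    · intro l hl hl2
      have hlt : l < Nat.find hex := hl
      have hmin := Nat.find_min hex hlt
      have hge : 0 ≤ g l := by
        by_contra h
        exact hmin ⟨hl2, by linarith⟩
      simp only [hg] at hge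
      linarith
    · intro l hl hl2
      have hfind := Nat.find_spec hex
      have main : ∀ l, Nat.find hex ≤ l → l + 1 ≤ min n L → g l < 0 := by
        intro l
        induction l with
        | zero =>
          intro h _
          have h0 : Nat.find hex = 0 := by omega
          rw [← h0]; exact hfind.2
        | succ k ih =>
          intro h h2
          rcases Nat.lt_or_ge (Nat.find hex) (k + 1) with h' | h'
          · have hk := ih (by omega) (by omega)
            have := key k (by omega)
            linarith
          · have h0 : Nat.find hex = k + 1 := by omega
            rw [← h0]; exact hfind.2
      have := main l hl hl2
      simp only [hg] at this
      linarith
  · push_neg at hex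
    refine ⟨min n L, ?_, ?_⟩
    · intro l hl hl2
      have := hex l hl2
      simp only [hg] at this
      linarith
    · intro l hl hl2
      omega
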